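/- Let k be a field of characteristic p > 2, n = p^s·t with s ≥ 1, p ∤ t and t > 1, ξ a primitive t-th root of unity in k, and let A be an associative unital k-algebra containing elements g, a, b satisfying the H(1,0)-relations. For 1 ≤ i ≤ t−1 let e_i = (1/t)·Σ_{j=0}^{t−1} (ξ^{−i·p^s}·g^{p^s})^j and set ẽ_i = a^{p^s−p+1}·b^{p−1}·e_i. Then ẽ_i² = ((p−1)!/2^{p−1})·(1 − ξ^{i·p^s})·ẽ_i, and the scalar ((p−1)!/2^{p−1})·(1 − ξ^{i·p^s}) is nonzero in k; consequently ê_i := (((p−1)!/2^{p−1})·(1 − ξ^{i·p^s}))^{-1}·ẽ_i satisfies ê_i² = ê_i. -/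

import Mathlib

/-- Over a field of char `p > 2`, with `n = p^s t`, `t > 1`, `p ∤ t`,
`ξ` a primitive `t`-th root of unity, `g, a, b` satisfying the `H(1,0)`-relations, and
`1 ≤ i ≤ t-1`, the element `ẽ_i = a^(p^s-p+1) * b^(p-1) * e_i` satisfies
`ẽ_i² = c • ẽ_i` where `c = ((p-1)!/2^(p-1))(1 - ξ^(i p^s)) ≠ 0`; hence
`ê_i = c⁻¹ • ẽ_i` is an idempotent. -/
theorem stmt18 {k : Type*} [Field k] (p : ℕ) [CharP k p] (hp : 2 < p)
    (s t : ℕ) (hs : 1 ≤ s) (ht : 1 < t) (hpt : ¬ p ∣ t)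
    (ξ : k) (hξ : IsPrimitiveRoot ξ t)
    {A : Type*} [Ring A] [Algebra k A] (g a b : A)
    (hgn : g ^ (p ^ s * t) = 1) (hag : a * g = g * a) (hbg : b * g = g * a + g * b)
    (hap : a ^ p = 1 - g ^ p) (hbp : b ^ p = 0)
    (hba : b * a = a * b + (1 / 2 : k) • a ^ 2)
    (i : ℕ) (hi1 : 1 ≤ i) (hi2 : i ≤ t - 1) :
    let e : A :=
      (t : k)⁻¹ • ∑ j ∈ Finset.range t, (((ξ ^ (i * p ^ s))⁻¹) ^ j) • (g ^ (p ^ s)) ^ j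
    let et : A := a ^ (p ^ s - p + 1) * b ^ (p - 1) * e
    let c : k := (((p - 1).factorial : k) / 2 ^ (p - 1)) * (1 - ξ ^ (i * p ^ s))
    et * et = c • et ∧ c ≠ 0 ∧ (c⁻¹ • et) * (c⁻¹ • et) = c⁻¹ • et := by
  intro e et c
  have hprime : p.Prime := by
    rcases CharP.char_is_prime_or_zero k p with h | h
    · exact h
    · omega
  -- basic scalars
  set ζ : k := ξ ^ (i * p ^ s) with hζdef
  have hξ0 : ξ ≠ 0 := hξ.ne_zero (by omega)
  have hζ0 : ζ ≠ 0 := pow_ne_zero _ hξ0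
  have hζt : ζ ^ t = 1 := by
    rw [hζdef, ← pow_mul, mul_comm (i * p ^ s) t, pow_mul, hξ.pow_eq_one, one_pow]
  have hζ1 : ζ ≠ 1 := by
    intro h
    have hdvd : t ∣ i * p ^ s := (hξ.pow_eq_one_iff_dvd _).mp h
    have hcop : Nat.Coprime t (p ^ s) :=
      (((hprime.coprime_iff_not_dvd).mpr hpt).symm).pow_right s
    have : t ∣ i := hcop.dvd_of_dvd_mul_right hdvd
    have := Nat.le_of_dvd (by omega) this
    omega
  have ht0 : (t : k) ≠ 0 := by
    rw [Ne, CharP.cast_eq_zero_iff k p]; exact hpt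
  -- the element H and the sum S
  set H : A := g ^ (p ^ s) with hHdef
  set S : A := ∑ j ∈ Finset.range t, ((ζ⁻¹) ^ j) • H ^ j with hSdef
  have hHt : H ^ t = 1 := by rw [hHdef, ← pow_mul]; exact hgn
  have he : e = (t : k)⁻¹ • S := rfl
  -- commutation of a with g-powers
  have hcag : Commute a g := hag
  have hcaH : Commute a H := hcag.pow_right _
  have hcaS : Commute a S := Commute.sum_right _ _ _ fun j _ =>
    ((hcaH.pow_right j).smul_right _)
  have hcae : Commute a e := hcaS.smul_right _
  -- b and powers of g
  have hbgp : ∀ j : ℕ, b * g ^ j = g ^ j * b + (j : k) • (g ^ j * a) := by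
    intro j
    induction j with
    | zero => simp
    | succ j ih =>
      calc b * g ^ (j + 1) = (b * g ^ j) * g := by rw [pow_succ, mul_assoc]
        _ = g ^ j * (b * g) + (j : k) • (g ^ j * (a * g)) := by
            rw [ih, add_mul, smul_mul_assoc, mul_assoc, mul_assoc]
        _ = g ^ (j+1) * a + g ^ (j+1) * b + (j : k) • (g ^ (j+1) * a) := by
            rw [hbg, hag, mul_add]; simp only [← mul_assoc, pow_succ]
        _ = g ^ (j+1) * b + ((j:ℕ)+1 : k) • (g ^ (j+1) * a) := by
            rw [add_smul, one_smul]; abel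
        _ = g ^ (j+1) * b + (((j:ℕ)+1 : ℕ) : k) • (g ^ (j+1) * a) := by push_cast; ring_nf
  have hcbH : Commute b H := by
    have := hbgp (p ^ s)
    have hps0 : ((p ^ s : ℕ) : k) = 0 := by
      rw [CharP.cast_eq_zero_iff k p]; exact dvd_pow_self p (by omega)
    rw [hps0, zero_smul, add_zero] at this
    exact this
  have hcbS : Commute b S := Commute.sum_right _ _ _ fun j _ =>
    ((hcbH.pow_right j).smul_right _)
  have hcbe : Commute b e := hcbS.smul_right _
  -- H acts on S by ζ
  have hHS : H * S = ζ • S := by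
    have hterm : ∀ j : ℕ, (ζ⁻¹) ^ j • H ^ (j+1) = ζ • ((ζ⁻¹) ^ (j+1) • H ^ (j+1)) := by
      intro j
      rw [smul_smul]
      congr 1
      rw [pow_succ', ← mul_assoc, mul_inv_cancel₀ hζ0, one_mul]
    have hFt : ζ • ((ζ⁻¹) ^ t • H ^ t) = ζ • ((ζ⁻¹) ^ 0 • H ^ 0) := by
      rw [hHt, inv_pow, hζt, inv_one]; simp
    calc H * S = ∑ j ∈ Finset.range t, (ζ⁻¹) ^ j • (H * H ^ j) := by
          rw [hSdef, Finset.mul_sum]; exact Finset.sum_congr rfl fun j _ => (mul_smul_comm _ _ _)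
      _ = ∑ j ∈ Finset.range t, ζ • ((ζ⁻¹) ^ (j+1) • H ^ (j+1)) := by
          refine Finset.sum_congr rfl fun j _ => ?_
          rw [← pow_succ', hterm]
      _ = ∑ j ∈ Finset.range t, ζ • ((ζ⁻¹) ^ j • H ^ j) := by
          have h1 := Finset.sum_range_succ' (fun j => ζ • ((ζ⁻¹) ^ j • H ^ j)) t
          have h2 := Finset.sum_range_succ (fun j => ζ • ((ζ⁻¹) ^ j • H ^ j)) t
          rw [h2, hFt] at h1
          exact add_right_cancel h1.symm
      _ = ζ • S := by rw [hSdef, Finset.smul_sum]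
  have hHe : H * e = ζ • e := by
    rw [he, mul_smul_comm, hHS, smul_comm]
  have hHjS : ∀ j : ℕ, H ^ j * S = (ζ ^ j) • S := by
    intro j
    induction j with
    | zero => simp
    | succ j ih => rw [pow_succ, mul_assoc, hHS, mul_smul_comm, ih, smul_smul, pow_succ, mul_comm ζ (ζ ^ j)]
  have hSS : S * S = (t : k) • S := by
    calc S * S = ∑ j ∈ Finset.range t, (ζ⁻¹) ^ j • (H ^ j * S) := by
          rw [hSdef, Finset.sum_mul]; exact Finset.sum_congr rfl fun j _ => (smul_mul_assoc _ _ _)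
      _ = ∑ j ∈ Finset.range t, S := by
          refine Finset.sum_congr rfl fun j _ => ?_
          rw [hHjS, smul_smul, ← mul_pow, inv_mul_cancel₀ hζ0, one_pow, one_smul]
      _ = (t : k) • S := by rw [Finset.sum_const, Finset.card_range, Nat.cast_smul_eq_nsmul]
  have hee : e * e = e := by
    rw [he, smul_mul_assoc, mul_smul_comm, hSS, smul_smul, smul_smul]
    congr 1
    field_simp
  -- a^(p^s) = 1 - H
  have haps : a ^ (p ^ s) = 1 - H := by
    haveI : Fact p.Prime := ⟨hprime⟩
    haveI : CharP (Polynomial k) p := charP_of_injective_algebraMap' (A := Polynomial k) k p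
    have hexp : p ^ s = p * p ^ (s - 1) := by
      rw [← pow_succ']; congr 1; omega
    have hpoly : ((1 : Polynomial k) - Polynomial.X ^ p) ^ (p ^ (s - 1)) =
        1 - Polynomial.X ^ (p ^ s) := by
      rw [sub_pow_char_pow, one_pow, ← pow_mul, ← hexp]
    have h2 := congrArg (Polynomial.aeval (R := k) g) hpoly
    simp only [map_pow, map_sub, map_one, Polynomial.aeval_X] at h2
    calc a ^ (p ^ s) = (a ^ p) ^ (p ^ (s - 1)) := by rw [← pow_mul, ← hexp]
      _ = (1 - g ^ p) ^ (p ^ (s - 1)) := by rw [hap]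
      _ = 1 - g ^ (p ^ s) := h2
      _ = 1 - H := rfl
  -- b * a^j
  have hbap : ∀ j : ℕ, b * a ^ j = a ^ j * b + (((j : k))/2) • a ^ (j + 1) := by
    intro j
    induction j with
    | zero => simp
    | succ j ih =>
      calc b * a ^ (j + 1) = (b * a ^ j) * a := by rw [pow_succ, mul_assoc]
        _ = a ^ j * (b * a) + ((j : k)/2) • (a ^ (j + 1) * a) := by
            rw [ih, add_mul, smul_mul_assoc, mul_assoc]
        _ = a ^ (j + 1) * b + (((j : k) + 1)/2) • a ^ (j + 2) := by
            rw [hba, mul_add, mul_smul_comm, ← mul_assoc, ← pow_succ, ← pow_succ,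
              show a ^ j * a ^ 2 = a ^ (j + 2) from (pow_add a j 2).symm]
            match_scalars <;> ring
        _ = a ^ (j + 1) * b + (((j + 1 : ℕ) : k)/2) • a ^ ((j + 1) + 1) := by push_cast; ring_nf
  -- the exponent m
  set m : ℕ := p ^ s - p + 1 with hmdef
  have hpps : p ≤ p ^ s := Nat.le_self_pow (by omega) p
  have hmq : m + (p - 1) = p ^ s := by omega
  have hmk : ((m : ℕ) : k) = 1 := by
    have h1 : ((p ^ s : ℕ) : k) = 0 := by
      rw [CharP.cast_eq_zero_iff k p]; exact dvd_pow_self p (by omega)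
    have h2 : ((p : ℕ) : k) = 0 := by
      rw [CharP.cast_eq_zero_iff k p]
    have : (m : ℕ) = p ^ s - p + 1 := rfl
    rw [this, Nat.cast_add, Nat.cast_sub (by omega), h1, h2, Nat.cast_one]
    ring
  -- X = b + (1/2) • a
  set X : A := b + (1/2 : k) • a with hXdef
  have hbam : b * a ^ m = a ^ m * X := by
    rw [hbap m, hmk, hXdef, mul_add, mul_smul_comm, ← pow_succ]
  have hbjm : ∀ j : ℕ, b ^ j * a ^ m = a ^ m * X ^ j := by
    intro j
    induction j with
    | zero => simp
    | succ j ih =>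
      rw [pow_succ', mul_assoc, ih, ← mul_assoc, hbam, mul_assoc, ← pow_succ']
  -- the key identity
  have hbbq : b * b ^ (p - 1) = 0 := by
    rw [← pow_succ', show p - 1 + 1 = p by omega, hbp]
  have hkey : ∀ j : ℕ, X ^ j * b ^ (p - 1) =
      ((j.factorial : k)/2 ^ j) • (a ^ j * b ^ (p - 1)) := by
    intro j
    induction j with
    | zero => simp
    | succ j ih =>
      calc X ^ (j + 1) * b ^ (p - 1) = X * (X ^ j * b ^ (p - 1)) := by
            rw [pow_succ', mul_assoc]
        _ = ((j.factorial : k)/2 ^ j) • (X * (a ^ j * b ^ (p - 1))) := by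
            rw [ih, mul_smul_comm]
        _ = ((j.factorial : k)/2 ^ j) • ((((j : k) + 1)/2) • (a ^ (j + 1) * b ^ (p - 1))) := by
            congr 1
            rw [hXdef, add_mul, smul_mul_assoc, ← mul_assoc, hbap j, add_mul, smul_mul_assoc,
              mul_assoc, hbbq, mul_zero, zero_add, ← mul_assoc, ← pow_succ']
            match_scalars <;> ring
        _ = (((j + 1).factorial : k)/2 ^ (j + 1)) • (a ^ (j + 1) * b ^ (p - 1)) := by
            rw [smul_smul, Nat.factorial_succ]
            congr 1
            push_cast
            field_simp
            ring
  -- assembly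
  have hCone : Commute e (a ^ m * b ^ (p - 1)) :=
    ((hcae.symm.pow_right m).mul_right (hcbe.symm.pow_right (p - 1)))
  have hetet : et * et = a ^ m * (b ^ (p - 1) * (a ^ m * (b ^ (p - 1) * e))) := by
    show (a ^ m * b ^ (p - 1) * e) * (a ^ m * b ^ (p - 1) * e) = _
    have h1 : e * (a ^ m * (b ^ (p - 1) * e)) = a ^ m * (b ^ (p - 1) * (e * e)) := by
      calc e * (a ^ m * (b ^ (p - 1) * e)) = (e * (a ^ m * b ^ (p - 1))) * e := by
            simp only [mul_assoc]
        _ = ((a ^ m * b ^ (p - 1)) * e) * e := by rw [hCone.eq]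
        _ = a ^ m * (b ^ (p - 1) * (e * e)) := by simp only [mul_assoc]
    calc (a ^ m * b ^ (p - 1) * e) * (a ^ m * b ^ (p - 1) * e)
        = a ^ m * (b ^ (p - 1) * (e * (a ^ m * (b ^ (p - 1) * e)))) := by simp only [mul_assoc]
      _ = a ^ m * (b ^ (p - 1) * (a ^ m * (b ^ (p - 1) * (e * e)))) := by rw [h1]
      _ = a ^ m * (b ^ (p - 1) * (a ^ m * (b ^ (p - 1) * e))) := by rw [hee]
  have hstep2 : a ^ m * (b ^ (p - 1) * (a ^ m * (b ^ (p - 1) * e)))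
      = (((p - 1).factorial : k)/2 ^ (p - 1)) • (a ^ m * ((1 - H) * (b ^ (p - 1) * e))) := by
    calc a ^ m * (b ^ (p - 1) * (a ^ m * (b ^ (p - 1) * e)))
        = a ^ m * ((b ^ (p - 1) * a ^ m) * (b ^ (p - 1) * e)) := by simp only [mul_assoc]
      _ = a ^ m * ((a ^ m * X ^ (p - 1)) * (b ^ (p - 1) * e)) := by rw [hbjm]
      _ = a ^ m * (a ^ m * ((X ^ (p - 1) * b ^ (p - 1)) * e)) := by simp only [mul_assoc]
      _ = a ^ m * (a ^ m * (((((p - 1).factorial : k)/2 ^ (p - 1)) •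
            (a ^ (p - 1) * b ^ (p - 1))) * e)) := by rw [hkey]
      _ = (((p - 1).factorial : k)/2 ^ (p - 1)) •
            (a ^ m * (a ^ m * (a ^ (p - 1) * (b ^ (p - 1) * e)))) := by
          rw [smul_mul_assoc, mul_smul_comm, mul_smul_comm]; simp only [mul_assoc]
      _ = (((p - 1).factorial : k)/2 ^ (p - 1)) •
            (a ^ m * (a ^ (m + (p - 1)) * (b ^ (p - 1) * e))) := by
          rw [show a ^ m * (a ^ (p - 1) * (b ^ (p - 1) * e))
              = a ^ (m + (p - 1)) * (b ^ (p - 1) * e) by rw [← mul_assoc, ← pow_add]]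
      _ = (((p - 1).factorial : k)/2 ^ (p - 1)) • (a ^ m * ((1 - H) * (b ^ (p - 1) * e))) := by
          rw [hmq, haps]
  have hcb1H : Commute (b ^ (p - 1)) (1 - H) :=
    Commute.sub_right (Commute.one_right _) (hcbH.pow_left _)
  have h1He : (1 - H) * e = (1 - ζ) • e := by
    rw [sub_mul, one_mul, hHe, sub_smul, one_smul]
  have hone : et * et = c • et := by
    have hcdef : c = (((p - 1).factorial : k)/2 ^ (p - 1)) * (1 - ζ) := rfl
    calc et * et = (((p - 1).factorial : k)/2 ^ (p - 1)) •
          (a ^ m * ((1 - H) * (b ^ (p - 1) * e))) := by rw [hetet, hstep2]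
      _ = (((p - 1).factorial : k)/2 ^ (p - 1)) •
          (a ^ m * (b ^ (p - 1) * ((1 - H) * e))) := by
          rw [show (1 - H) * (b ^ (p - 1) * e) = b ^ (p - 1) * ((1 - H) * e) by
            rw [← mul_assoc, ← hcb1H.eq, mul_assoc]]
      _ = ((((p - 1).factorial : k)/2 ^ (p - 1)) * (1 - ζ)) • (a ^ m * (b ^ (p - 1) * e)) := by
          rw [h1He, mul_smul_comm, mul_smul_comm, smul_smul]
      _ = c • et := by rw [hcdef]; show _ = c • (a ^ m * b ^ (p - 1) * e); rw [mul_assoc]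
  have hfact : ((p - 1).factorial : k) ≠ 0 := by
    rw [Ne, CharP.cast_eq_zero_iff k p]
    intro hdvd
    have := (Nat.Prime.dvd_factorial hprime).mp hdvd
    omega
  have h2k : (2 : k) ≠ 0 := by
    have : ((2 : ℕ) : k) ≠ 0 := by
      rw [Ne, CharP.cast_eq_zero_iff k p]
      intro hdvd
      have := Nat.le_of_dvd (by omega) hdvd
      omega
    simpa using this
  have hc0 : c ≠ 0 :=
    mul_ne_zero (div_ne_zero hfact (pow_ne_zero _ h2k)) (sub_ne_zero.mpr (Ne.symm hζ1))
  refine ⟨hone, hc0, ?_⟩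
  rw [smul_mul_smul_comm, hone, smul_smul, mul_assoc, inv_mul_cancel₀ hc0, mul_one]
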